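/- Let G be a 2-connected graph whose periphery has cardinality at least 2. Then G contains two peripheral vertices u, v such that G - {u, v} is connected. -/

import Mathlib

open SimpleGraph

/-- `G - S` is disconnected: some two remaining vertices are not connected. -/
def IsVertexCut {V : Type*} (G : SimpleGraph V) (S : Set V) : Prop :=
  ¬ (G.induce Sᶜ).Preconnected

/-- `G` is `k`-connected. -/
def KConnected {V : Type*} [Fintype V] (G : SimpleGraph V) (k : ℕ) : Prop :=
  k < Fintype.card V ∧ ∀ S : Finset V, S.card < k → ¬ IsVertexCut G ↑S

/-- `S` is an independent set of `G`. -/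
def IsIndep {V : Type*} (G : SimpleGraph V) (S : Set V) : Prop :=
  S.Pairwise fun u v => ¬ G.Adj u v

/-- `v` is a peripheral vertex: its eccentricity equals the diameter of `G`. -/
def IsPeripheral {V : Type*} (G : SimpleGraph V) (v : V) : Prop :=
  (⨆ u, G.edist v u) = G.ediam

section AuxStmt11
variable {V : Type} {G : SimpleGraph V}


lemma reach_induce_of_walk {S : Set V} {a b : V} (w : G.Walk a b)
    (h : ∀ v ∈ w.support, v ∈ S) (ha : a ∈ S) (hb : b ∈ S) :
    (G.induce S).Reachable ⟨a, ha⟩ ⟨b, hb⟩ := by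
  induction w with
  | nil => rfl
  | @cons a c b hadj p ih =>
    have hc : c ∈ S := h c (by simp)
    have h1 : (G.induce S).Adj ⟨a, ha⟩ ⟨c, hc⟩ := hadj
    exact h1.reachable.trans (ih (fun v hv => h v (by simp [hv])) hc hb)

lemma exists_walk_of_reach_induce {S : Set V} {a b : ↥S}
    (h : (G.induce S).Reachable a b) : ∃ w : G.Walk a.1 b.1, ∀ v ∈ w.support, v ∈ S := by
  obtain ⟨p⟩ := h
  refine ⟨p.map (Embedding.induce S).toHom, ?_⟩
  intro v hv
  replace hv : v ∈ p.support.map (Embedding.induce (G := G) S).toHom := by rw [← Walk.support_map]; exact hv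
  obtain ⟨x, hx, rfl⟩ := List.mem_map.1 hv
  exact x.2

lemma edist_add_edist_le_length [DecidableEq V] {a b u : V} (w : G.Walk a b) (hu : u ∈ w.support) :
    G.edist a u + G.edist u b ≤ w.length := by
  have h1 := SimpleGraph.edist_le (w.takeUntil u hu)
  have h2 := SimpleGraph.edist_le (w.dropUntil u hu)
  have h3 : (w.takeUntil u hu).length + (w.dropUntil u hu).length = w.length := by
    rw [← Walk.length_append, Walk.take_spec]
  calc G.edist a u + G.edist u b ≤ ((w.takeUntil u hu).length : ℕ∞) + (w.dropUntil u hu).length :=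
        add_le_add h1 h2
    _ = w.length := by rw [← h3]; push_cast; ring

lemma good_case (hpre : G.Preconnected) {u t r : V} {M : ℕ∞} (hM : M ≠ ⊤)
    (hrt : G.edist r t = M) (hru : M ≤ G.edist r u)
    (hall : ∀ x, x ≠ u → G.edist r x ≤ M)
    (hr : r ∈ ({u, t} : Set V)ᶜ) :
    ∀ x (hx : x ∈ ({u, t} : Set V)ᶜ),
      (G.induce ({u, t} : Set V)ᶜ).Reachable ⟨r, hr⟩ ⟨x, hx⟩ := by
  classical
  lift M to ℕ using hM
  intro x hx
  have hxut : x ≠ u ∧ x ≠ t := by simpa [Set.mem_compl_iff, not_or] using hx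
  by_cases hxr : x = r
  · subst hxr; rfl
  obtain ⟨w, hw⟩ := (hpre r x).exists_walk_length_eq_edist
  have hlen : (w.length : ℕ∞) ≤ (M : ℕ∞) := hw ▸ hall x hxut.1
  have hsup : ∀ v ∈ w.support, v ∈ ({u, t} : Set V)ᶜ := by
    intro v hv
    simp only [Set.mem_compl_iff, Set.mem_insert_iff, Set.mem_singleton_iff, not_or]
    constructor
    · rintro rfl
      have hb := edist_add_edist_le_length w hv
      have h2 : (1 : ℕ∞) ≤ G.edist v x := Order.one_le_iff_pos.mpr (G.edist_pos_of_ne (Ne.symm hxut.1))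
      have hcon : (M : ℕ∞) + 1 ≤ (M : ℕ∞) :=
        le_trans (add_le_add hru h2) (le_trans hb hlen)
      have : M + 1 ≤ M := by exact_mod_cast hcon
      omega
    · rintro rfl
      have hb := edist_add_edist_le_length w hv
      have h2 : (1 : ℕ∞) ≤ G.edist v x := Order.one_le_iff_pos.mpr (G.edist_pos_of_ne (Ne.symm hxut.2))
      have hcon : (M : ℕ∞) + 1 ≤ (M : ℕ∞) := by
        calc (M : ℕ∞) + 1 = G.edist r v + 1 := by rw [hrt]
          _ ≤ G.edist r v + G.edist v x := by exact add_le_add le_rfl h2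
          _ ≤ w.length := hb
          _ ≤ M := hlen
      have : M + 1 ≤ M := by exact_mod_cast hcon
      omega
  exact reach_induce_of_walk w hsup hr hx

lemma firsthit {S : Set V} {u : V} (hu : u ∈ S) :
    ∀ {a : V} (w : G.Walk a u), a ∉ S → (∀ v ∈ w.support, v = u ∨ v ∉ S) →
    ∃ y, G.Adj y u ∧ ∃ (hy : y ∈ Sᶜ) (ha : a ∈ Sᶜ), (G.induce Sᶜ).Reachable ⟨a, ha⟩ ⟨y, hy⟩ := by
  intro a w
  induction w with
  | nil => intro ha _; exact absurd hu ha
  | @cons a c u hadj p ih =>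
    intro ha hsup
    by_cases hc : c = u
    · subst hc
      exact ⟨a, hadj, ha, ha, Reachable.refl _⟩
    · have hcS : c ∉ S := by
        rcases hsup c (by simp) with h | h
        · exact absurd h hc
        · exact h
      obtain ⟨y, hyadj, hy, hc', hreach⟩ := ih hu hcS (fun v hv => hsup v (by simp [hv]))
      have hadj' : (G.induce Sᶜ).Adj ⟨a, ha⟩ ⟨c, hc'⟩ := hadj
      exact ⟨y, hyadj, hy, ha, hadj'.reachable.trans hreach⟩


end AuxStmt11

theorem stmt11 (V : Type) [Fintype V] (G : SimpleGraph V) (hconn : KConnected G 2)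
    (hper : 2 ≤ {v : V | IsPeripheral G v}.ncard) :
    ∃ u v : V, u ≠ v ∧ IsPeripheral G u ∧ IsPeripheral G v ∧
      (G.induce ({u, v} : Set V)ᶜ).Connected := by
  classical
  obtain ⟨hcard, hcut⟩ := hconn
  have hne : Nonempty V := Fintype.card_pos_iff.mp (by omega)
  -- G is preconnected
  have hpre : G.Preconnected := by
    have h1 : (G.induce ((((∅ : Finset V) : Set V))ᶜ)).Preconnected :=
      not_not.mp (hcut ∅ (by simp))
    intro a b
    obtain ⟨w, -⟩ := exists_walk_of_reach_induce (h1 ⟨a, by simp⟩ ⟨b, by simp⟩)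
    exact ⟨w⟩
  have hetop : ∀ a b : V, G.edist a b ≠ ⊤ := fun a b =>
    (edist_ne_top_iff_reachable).mpr (hpre a b)
  -- diametral pair
  obtain ⟨u, hu⟩ := Finite.exists_max (fun v => ⨆ w, G.edist v w)
  obtain ⟨r, hr⟩ := Finite.exists_max (fun w => G.edist u w)
  have heccu : (⨆ w, G.edist u w) = G.edist u r := le_antisymm (iSup_le hr) (le_iSup _ r)
  have hdiam : G.ediam = G.edist u r := by
    apply le_antisymm
    · exact iSup_le fun v => le_trans (hu v) (le_of_eq heccu)
    · exact edist_le_ediam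
  obtain ⟨dn, hdn⟩ : ∃ n : ℕ, G.ediam = (n : ℕ∞) :=
    ⟨(G.ediam).toNat, (ENat.coe_toNat (by rw [hdiam]; exact hetop u r)).symm⟩
  have hdur : G.edist u r = (dn : ℕ∞) := by rw [← hdn, hdiam]
  -- dn ≥ 1
  have hd1 : 1 ≤ dn := by
    by_contra h
    have hdz : dn = 0 := by omega
    have hsing : ∀ a b : V, a = b := by
      intro a b
      have := @edist_le_ediam _ G a b
      rw [hdn, hdz] at this
      have hz : G.edist a b = 0 := le_antisymm (by exact_mod_cast this) zero_le
      rwa [SimpleGraph.edist_eq_zero_iff] at hz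
    have : Fintype.card V ≤ 1 := Fintype.card_le_one_iff.mpr hsing
    omega
  have hur_ne : u ≠ r := by
    intro h
    rw [← h, G.edist_self] at hdur
    have : (0:ℕ) = dn := by exact_mod_cast hdur
    omega
  -- peripherality from realizing the diameter
  have hperiph : ∀ a b : V, G.edist a b = G.ediam → IsPeripheral G a := by
    intro a b h
    exact le_antisymm (iSup_le fun w => edist_le_ediam) (h ▸ le_iSup (G.edist a) b)
  have hper_u : IsPeripheral G u := hperiph u r hdiam.symm
  have hper_r : IsPeripheral G r := hperiph r u (by rw [SimpleGraph.edist_comm]; exact hdiam.symm)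
  -- third vertex
  obtain ⟨c, hcu, hcr⟩ : ∃ c : V, c ≠ u ∧ c ≠ r := by
    by_contra h
    push_neg at h
    have hsub : (Finset.univ : Finset V) ⊆ {u, r} := by
      intro x _
      rcases Classical.em (x = u) with h1 | h1
      · simp [h1]
      · simp [h x h1]
    have := Finset.card_le_card hsub
    rw [Finset.card_univ] at this
    have h2 := Finset.card_insert_le u ({r} : Finset V)
    simp at h2
    omega
  -- max of edist r over x ≠ u
  obtain ⟨t, htF, htmax⟩ := Finset.exists_max_image (Finset.univ.erase u)
    (fun x => G.edist r x) ⟨r, by simp [Ne.symm hur_ne]⟩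
  have htu : t ≠ u := (Finset.mem_erase.mp htF).1
  have hall : ∀ x, x ≠ u → G.edist r x ≤ G.edist r t := fun x hx =>
    htmax x (by simp [hx])
  obtain ⟨mn, hmn⟩ : ∃ n : ℕ, G.edist r t = (n : ℕ∞) :=
    ⟨(G.edist r t).toNat, (ENat.coe_toNat (hetop r t)).symm⟩
  have hMd : mn ≤ dn := by
    have := @edist_le_ediam _ G r t
    rw [hmn, hdn] at this
    exact_mod_cast this
  have hM1 : 1 ≤ mn := by
    have h1 : (1 : ℕ∞) ≤ G.edist r c := Order.one_le_iff_pos.mpr (G.edist_pos_of_ne (Ne.symm hcr))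
    have := le_trans h1 (hall c hcu)
    rw [hmn] at this
    exact_mod_cast this
  have htr : t ≠ r := by
    intro h
    rw [h, G.edist_self] at hmn
    have : (0:ℕ) = mn := by exact_mod_cast hmn
    omega
  by_cases hP : ∃ p, p ≠ u ∧ G.edist r p = (mn : ℕ∞) ∧ IsPeripheral G p
  · -- good case: pair (u, p)
    obtain ⟨p, hpu, hpM, hpper⟩ := hP
    have hpr : p ≠ r := by
      intro h
      rw [h, G.edist_self] at hpM
      have : (0:ℕ) = mn := by exact_mod_cast hpM
      omega
    have hrmem : r ∈ ({u, p} : Set V)ᶜ := by simp [Ne.symm hur_ne, Ne.symm hpr]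
    have hgc := good_case (G := G) hpre (u := u) (t := p) (r := r) (M := (mn : ℕ∞))
      (by simp) hpM (by rw [SimpleGraph.edist_comm, hdur]; exact_mod_cast hMd)
      (fun x hx => hmn ▸ hall x hx) hrmem
    refine ⟨u, p, Ne.symm hpu, hper_u, hpper, ?_⟩
    rw [connected_iff]
    refine ⟨?_, ⟨⟨r, hrmem⟩⟩⟩
    rintro ⟨a, ha⟩ ⟨b, hb⟩
    exact (hgc a ha).symm.trans (hgc b hb)
  · -- bad case: pair (u, r)
    push_neg at hP
    -- mn < dn
    have hmd : mn + 1 ≤ dn := by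
      rcases Nat.lt_or_ge mn dn with h | h
      · omega
      · exfalso
        have hmdn : mn = dn := by omega
        have : IsPeripheral G t := by
          apply hperiph t r
          rw [SimpleGraph.edist_comm, hmn, hmdn, hdn]
        exact hP t htu (by rw [hmn]) this
    -- every neighbor of u is non-peripheral with small eccentricity
    have hnbr : ∀ y, G.Adj y u → ∀ w, G.edist y w + 1 ≤ (dn : ℕ∞) := by
      intro y hyu
      have hyM : G.edist r y = (mn : ℕ∞) := by
        obtain ⟨en, hen⟩ : ∃ n : ℕ, G.edist r y = (n : ℕ∞) :=
          ⟨(G.edist r y).toNat, (ENat.coe_toNat (hetop r y)).symm⟩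
        have hle : en ≤ mn := by
          have := hall y hyu.ne
          rw [hen, hmn] at this
          exact_mod_cast this
        have hge : dn ≤ en + 1 := by
          have htri : G.edist r u ≤ G.edist r y + G.edist y u := G.edist_triangle
          have h1 : G.edist y u ≤ 1 := by simpa using G.edist_le hyu.toWalk
          have : (dn : ℕ∞) ≤ (en : ℕ∞) + 1 := by
            calc (dn : ℕ∞) = G.edist r u := by rw [SimpleGraph.edist_comm, ← hdur, SimpleGraph.edist_comm]
              _ ≤ G.edist r y + G.edist y u := htri
              _ ≤ (en : ℕ∞) + 1 := add_le_add (le_of_eq hen) h1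
          exact_mod_cast this
        have : en = mn := by omega
        rw [hen, this]
      have hnp : ¬ IsPeripheral G y := hP y hyu.ne hyM
      have hlt : (⨆ w, G.edist y w) < G.ediam :=
        lt_of_le_of_ne (iSup_le fun w => edist_le_ediam) hnp
      intro w
      have h1 : G.edist y w < (dn : ℕ∞) := lt_of_le_of_lt (le_iSup (G.edist y) w) (hdn ▸ hlt)
      obtain ⟨en, hen⟩ : ∃ n : ℕ, G.edist y w = (n : ℕ∞) :=
        ⟨(G.edist y w).toNat, (ENat.coe_toNat (hetop y w)).symm⟩
      rw [hen] at h1 ⊢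
      have : en < dn := by exact_mod_cast h1
      exact_mod_cast Nat.succ_le_of_lt this
    -- K = G - {u, r} is preconnected
    have hKpre : (G.induce ({u, r} : Set V)ᶜ).Preconnected := by
      rintro ⟨a, ha⟩ ⟨b, hb⟩
      have ha' : a ≠ u ∧ a ≠ r := by simpa [not_or] using ha
      have hb' : b ≠ u ∧ b ≠ r := by simpa [not_or] using hb
      -- walk from a to u avoiding r
      have hpc1 : (G.induce ((({r} : Finset V) : Set V))ᶜ).Preconnected :=
        not_not.mp (hcut {r} (by simp))
      obtain ⟨w1, hw1⟩ := exists_walk_of_reach_induce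
        (hpc1 ⟨a, by simp [ha'.2]⟩ ⟨u, by simp [hur_ne]⟩)
      obtain ⟨ya, hya_adj, hya, ha2, hreach_a⟩ := firsthit (S := ({u, r} : Set V))
        (by simp) w1 (by simp [ha'.1, ha'.2])
        (by
          intro v hv
          by_cases hvu : v = u
          · exact Or.inl hvu
          · refine Or.inr ?_
            have := hw1 v hv
            simp only [Finset.coe_singleton, Set.mem_compl_iff, Set.mem_singleton_iff] at this
            simp [hvu, this])
      -- walk from b to r avoiding u
      have hpc2 : (G.induce ((({u} : Finset V) : Set V))ᶜ).Preconnected :=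
        not_not.mp (hcut {u} (by simp))
      obtain ⟨w2, hw2⟩ := exists_walk_of_reach_induce
        (hpc2 ⟨b, by simp [hb'.1]⟩ ⟨r, by simp [Ne.symm hur_ne]⟩)
      obtain ⟨yb, hyb_adj, hyb, hb2, hreach_b⟩ := firsthit (S := ({u, r} : Set V))
        (by simp) w2 (by simp [hb'.1, hb'.2])
        (by
          intro v hv
          by_cases hvr : v = r
          · exact Or.inl hvr
          · refine Or.inr ?_
            have := hw2 v hv
            simp only [Finset.coe_singleton, Set.mem_compl_iff, Set.mem_singleton_iff] at this
            simp [hvr, this])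
      -- connect ya and yb
      have hya' : ya ≠ u ∧ ya ≠ r := by simpa [not_or] using hya
      have hyb' : yb ≠ u ∧ yb ≠ r := by simpa [not_or] using hyb
      obtain ⟨w3, hw3⟩ := (hpre ya yb).exists_walk_length_eq_edist
      have hlen : (w3.length : ℕ∞) + 1 ≤ (dn : ℕ∞) := by
        rw [hw3]; exact hnbr ya hya_adj yb
      have hub : (dn : ℕ∞) ≤ G.edist u yb + 1 := by
        calc (dn : ℕ∞) = G.edist u r := hdur.symm
          _ ≤ G.edist u yb + G.edist yb r := G.edist_triangle
          _ ≤ G.edist u yb + 1 := add_le_add le_rfl (by simpa using G.edist_le hyb_adj.toWalk)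
      have hra : (dn : ℕ∞) ≤ G.edist ya r + 1 := by
        have : (dn : ℕ∞) ≤ G.edist r ya + 1 := by
          calc (dn : ℕ∞) = G.edist r u := by rw [SimpleGraph.edist_comm]; exact hdur.symm
            _ ≤ G.edist r ya + G.edist ya u := G.edist_triangle
            _ ≤ G.edist r ya + 1 := add_le_add le_rfl (by simpa using G.edist_le hya_adj.toWalk)
        rwa [SimpleGraph.edist_comm (u := r)] at this
      have hsup3 : ∀ v ∈ w3.support, v ∈ ({u, r} : Set V)ᶜ := by
        intro v hv
        simp only [Set.mem_compl_iff, Set.mem_insert_iff, Set.mem_singleton_iff, not_or]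
        constructor
        · rintro rfl
          have hb3 := edist_add_edist_le_length w3 hv
          have h2 : (1 : ℕ∞) ≤ G.edist ya v := Order.one_le_iff_pos.mpr
            (G.edist_pos_of_ne hya'.1)
          have hA : G.edist v yb + 1 ≤ (w3.length : ℕ∞) := by
            calc G.edist v yb + 1 = 1 + G.edist v yb := by ring
              _ ≤ G.edist ya v + G.edist v yb := add_le_add h2 le_rfl
              _ ≤ (w3.length : ℕ∞) := hb3
          have : (dn : ℕ∞) + 1 ≤ (dn : ℕ∞) :=
            le_trans (add_le_add (le_trans hub hA) le_rfl) hlen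
          have hcon : dn + 1 ≤ dn := by exact_mod_cast this
          omega
        · rintro rfl
          have hb3 := edist_add_edist_le_length w3 hv
          have h2 : (1 : ℕ∞) ≤ G.edist v yb := Order.one_le_iff_pos.mpr
            (G.edist_pos_of_ne (Ne.symm hyb'.2))
          have hA : G.edist ya v + 1 ≤ (w3.length : ℕ∞) :=
            calc G.edist ya v + 1 ≤ G.edist ya v + G.edist v yb := add_le_add le_rfl h2
              _ ≤ (w3.length : ℕ∞) := hb3
          have : (dn : ℕ∞) + 1 ≤ (dn : ℕ∞) :=
            le_trans (add_le_add (le_trans hra hA) le_rfl) hlen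
          have hcon : dn + 1 ≤ dn := by exact_mod_cast this
          omega
      have hmid : (G.induce ({u, r} : Set V)ᶜ).Reachable ⟨ya, hya⟩ ⟨yb, hyb⟩ :=
        reach_induce_of_walk w3 hsup3 hya hyb
      exact (hreach_a.trans hmid).trans hreach_b.symm
    refine ⟨u, r, hur_ne, hper_u, hper_r, ?_⟩
    rw [connected_iff]
    exact ⟨hKpre, ⟨⟨c, by simp [hcu, hcr]⟩⟩⟩
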